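/- Let a₁ ≥ a₂ ≥ a₃ > 0 and for each positive a let n(a) be the integer with 2^{n(a)-1} < a^{-1/2} ≤ 2^{n(a)}; write n_i = n(a_i) so n₁ ≤ n₂ ≤ n₃. Then Σ_{n ≤ n₃} 2^{-2n} · min(2^n, 2^{n₁}) · min(2^n, 2^{n₂}) · min(2^n, 2^{n₃}) ≤ C · a₁^{-1/2} · (2 + log(a₁/a₂)) for an absolute constant C. -/
import Mathlib

-- geometric finset sum over ℕ
lemma aux_geom_nat (t : Finset ℕ) : ∑ k ∈ t, ((2:ℝ)⁻¹) ^ k ≤ 2 := by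
  classical
  have hsub : t ⊆ Finset.range (t.sup id + 1) := fun k hk =>
    Finset.mem_range.mpr (Nat.lt_succ_of_le (Finset.le_sup (f := id) hk))
  calc ∑ k ∈ t, ((2:ℝ)⁻¹) ^ k ≤ ∑ k ∈ Finset.range (t.sup id + 1), ((2:ℝ)⁻¹) ^ k := by
        apply Finset.sum_le_sum_of_subset_of_nonneg hsub
        intro i _ _; positivity
    _ ≤ 2 := by
        have := geom_sum_eq (by norm_num : ((2:ℝ)⁻¹) ≠ 1) (t.sup id + 1)
        rw [this]
        have h0 : (0:ℝ) ≤ ((2:ℝ)⁻¹) ^ (t.sup id + 1) := by positivity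
        rw [div_le_iff_of_neg (by norm_num : ((2:ℝ)⁻¹ - 1) < 0)]
        nlinarith

-- geometric finset sum over ℤ bounded above
lemma aux_geom_int (m : ℤ) (s : Finset ℤ) (hs : ∀ n ∈ s, n ≤ m) :
    ∑ n ∈ s, (2:ℝ) ^ n ≤ 2 ^ (m + 1) := by
  classical
  have h1 : ∀ n ∈ s, (2:ℝ) ^ n = 2 ^ m * ((2:ℝ)⁻¹) ^ (m - n).toNat := by
    intro n hn
    have h : (m - n).toNat = (m - n) := Int.toNat_of_nonneg (by linarith [hs n hn])
    rw [← zpow_natCast ((2:ℝ)⁻¹), h, inv_zpow, ← zpow_neg,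
      ← zpow_add₀ (by norm_num : (2:ℝ) ≠ 0)]
    congr 1; ring
  rw [Finset.sum_congr rfl h1, ← Finset.mul_sum]
  have hinj : Set.InjOn (fun n => (m - n).toNat) s := by
    intro a ha b hb hab
    simp only at hab
    have ha' : (0:ℤ) ≤ m - a := by linarith [hs a ha]
    have hb' : (0:ℤ) ≤ m - b := by linarith [hs b hb]
    omega
  have := Finset.sum_image (f := fun k => ((2:ℝ)⁻¹) ^ k) (g := fun n => (m - n).toNat)
    (s := s) (fun a ha b hb hab => hinj ha hb hab)
  rw [← this]
  calc (2:ℝ) ^ m * ∑ k ∈ s.image (fun n => (m - n).toNat), ((2:ℝ)⁻¹) ^ k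
      ≤ (2:ℝ) ^ m * 2 := by
        apply mul_le_mul_of_nonneg_left (aux_geom_nat _) (by positivity)
    _ = 2 ^ (m + 1) := by rw [zpow_add₀ (by norm_num : (2:ℝ) ≠ 0)]; ring

lemma aux_key (n₁ n₂ n₃ : ℤ) (h12 : n₁ ≤ n₂) (h23 : n₂ ≤ n₃) (s : Finset ℤ)
    (hs : ∀ n ∈ s, n ≤ n₃) :
    ∑ n ∈ s, ((2:ℝ) ^ (-2 * n) * min ((2:ℝ) ^ n) ((2:ℝ) ^ n₁) *
        min ((2:ℝ) ^ n) ((2:ℝ) ^ n₂) * min ((2:ℝ) ^ n) ((2:ℝ) ^ n₃))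
      ≤ (2:ℝ) ^ n₁ * (4 + ((n₂ - n₁ : ℤ) : ℝ)) := by
  classical
  have h2 : (1:ℝ) ≤ 2 := one_le_two
  have hne : (2:ℝ) ≠ 0 := two_ne_zero
  set f : ℤ → ℝ := fun n => (2:ℝ) ^ (-2 * n) * min ((2:ℝ) ^ n) ((2:ℝ) ^ n₁) *
        min ((2:ℝ) ^ n) ((2:ℝ) ^ n₂) * min ((2:ℝ) ^ n) ((2:ℝ) ^ n₃) with hf
  -- values in the three regimes
  have hmin_le : ∀ n m : ℤ, n ≤ m → min ((2:ℝ) ^ n) ((2:ℝ) ^ m) = (2:ℝ) ^ n := by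
    intro n m h; exact min_eq_left (zpow_le_zpow_right₀ h2 h)
  have hmin_ge : ∀ n m : ℤ, m ≤ n → min ((2:ℝ) ^ n) ((2:ℝ) ^ m) = (2:ℝ) ^ m := by
    intro n m h; exact min_eq_right (zpow_le_zpow_right₀ h2 h)
  have hval1 : ∀ n : ℤ, n ≤ n₁ → f n = (2:ℝ) ^ n := by
    intro n hn
    rw [hf]; simp only
    rw [hmin_le n n₁ hn, hmin_le n n₂ (hn.trans h12), hmin_le n n₃ ((hn.trans h12).trans h23)]
    rw [← zpow_add₀ hne, ← zpow_add₀ hne, ← zpow_add₀ hne]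
    congr 1; ring
  have hval2 : ∀ n : ℤ, n₁ ≤ n → n ≤ n₂ → f n = (2:ℝ) ^ n₁ := by
    intro n hn1 hn2
    rw [hf]; simp only
    rw [hmin_ge n n₁ hn1, hmin_le n n₂ hn2, hmin_le n n₃ (hn2.trans h23)]
    rw [← zpow_add₀ hne, ← zpow_add₀ hne, ← zpow_add₀ hne]
    congr 1; ring
  have hval3 : ∀ n : ℤ, n₂ ≤ n → n ≤ n₃ → f n = (2:ℝ) ^ (n₁ + n₂ - n) := by
    intro n hn2 hn3
    rw [hf]; simp only
    rw [hmin_ge n n₁ (h12.trans hn2), hmin_ge n n₂ hn2, hmin_le n n₃ hn3]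
    rw [← zpow_add₀ hne, ← zpow_add₀ hne, ← zpow_add₀ hne]
    congr 1; ring
  -- split the finset
  set s1 := s.filter (fun n => n ≤ n₁) with hs1
  set s2 := (s.filter (fun n => ¬ n ≤ n₁)).filter (fun n => n ≤ n₂) with hs2
  set s3 := (s.filter (fun n => ¬ n ≤ n₁)).filter (fun n => ¬ n ≤ n₂) with hs3
  have hsplit : ∑ n ∈ s, f n = ∑ n ∈ s1, f n + (∑ n ∈ s2, f n + ∑ n ∈ s3, f n) := by
    rw [hs1, hs2, hs3, Finset.sum_filter_add_sum_filter_not, Finset.sum_filter_add_sum_filter_not]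
  have hb1 : ∑ n ∈ s1, f n ≤ (2:ℝ) ^ n₁ * 2 := by
    have : ∑ n ∈ s1, f n = ∑ n ∈ s1, (2:ℝ) ^ n := by
      apply Finset.sum_congr rfl
      intro n hn; exact hval1 n (Finset.mem_filter.mp hn).2
    rw [this]
    calc ∑ n ∈ s1, (2:ℝ) ^ n ≤ 2 ^ (n₁ + 1) :=
          aux_geom_int n₁ s1 (fun n hn => (Finset.mem_filter.mp hn).2)
      _ = (2:ℝ) ^ n₁ * 2 := by rw [zpow_add₀ hne]; ring
  have hb2 : ∑ n ∈ s2, f n ≤ (2:ℝ) ^ n₁ * ((n₂ - n₁ : ℤ) : ℝ) := by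
    have heq : ∑ n ∈ s2, f n = ∑ n ∈ s2, (2:ℝ) ^ n₁ := by
      apply Finset.sum_congr rfl
      intro n hn
      have h := Finset.mem_filter.mp hn
      have h' := Finset.mem_filter.mp h.1
      exact hval2 n (by omega) h.2
    rw [heq, Finset.sum_const, nsmul_eq_mul]
    have hcard : s2.card ≤ (Finset.Icc (n₁ + 1) n₂).card := by
      apply Finset.card_le_card
      intro n hn
      have h := Finset.mem_filter.mp hn
      have h' := Finset.mem_filter.mp h.1
      rw [Finset.mem_Icc]; omega
    rw [Int.card_Icc] at hcard
    have : (s2.card : ℝ) ≤ ((n₂ - n₁ : ℤ) : ℝ) := by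
      have : (s2.card : ℤ) ≤ n₂ - n₁ := by omega
      exact_mod_cast this
    have hp : (0:ℝ) < (2:ℝ) ^ n₁ := by positivity
    nlinarith
  have hb3 : ∑ n ∈ s3, f n ≤ (2:ℝ) ^ n₁ * 2 := by
    have heq : ∑ n ∈ s3, f n = ∑ n ∈ s3, (2:ℝ) ^ (n₁ + n₂ - n) := by
      apply Finset.sum_congr rfl
      intro n hn
      have h := Finset.mem_filter.mp hn
      have h' := Finset.mem_filter.mp h.1
      exact hval3 n (by omega) (hs n h'.1)
    rw [heq]
    have himg : ∑ n ∈ s3, (2:ℝ) ^ (n₁ + n₂ - n)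
        = ∑ m ∈ s3.image (fun n => n₁ + n₂ - n), (2:ℝ) ^ m := by
      rw [Finset.sum_image (fun a _ b _ hab => by omega)]
    rw [himg]
    calc ∑ m ∈ s3.image (fun n => n₁ + n₂ - n), (2:ℝ) ^ m ≤ 2 ^ ((n₁ - 1) + 1) := by
          apply aux_geom_int
          intro m hm
          obtain ⟨n, hn, rfl⟩ := Finset.mem_image.mp hm
          have h := Finset.mem_filter.mp hn
          omega
      _ ≤ (2:ℝ) ^ n₁ * 2 := by
          rw [(by ring : (n₁ - 1) + 1 = n₁)]
          nlinarith [zpow_pos (by norm_num : (0:ℝ) < 2) n₁]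
  have hp : (0:ℝ) < (2:ℝ) ^ n₁ := by positivity
  rw [hsplit]; nlinarith

/-- The final summation in the proof of the model form bound:
`Σ_{n ≤ n₃} 2^{-2n} min(2ⁿ,2^{n₁}) min(2ⁿ,2^{n₂}) min(2ⁿ,2^{n₃})
  ≤ C·a₁^{-1/2}·(2 + log(a₁/a₂))` for an absolute constant `C`. -/
theorem model_form_summation :
    ∃ C : ℝ, 0 < C ∧
      ∀ (a₁ a₂ a₃ : ℝ) (n₁ n₂ n₃ : ℤ),
        0 < a₃ → a₃ ≤ a₂ → a₂ ≤ a₁ →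
        (2 : ℝ) ^ (n₁ - 1) < a₁ ^ (-(1 : ℝ) / 2) →
        a₁ ^ (-(1 : ℝ) / 2) ≤ (2 : ℝ) ^ n₁ →
        (2 : ℝ) ^ (n₂ - 1) < a₂ ^ (-(1 : ℝ) / 2) →
        a₂ ^ (-(1 : ℝ) / 2) ≤ (2 : ℝ) ^ n₂ →
        (2 : ℝ) ^ (n₃ - 1) < a₃ ^ (-(1 : ℝ) / 2) →
        a₃ ^ (-(1 : ℝ) / 2) ≤ (2 : ℝ) ^ n₃ →
        (∑' n : {n : ℤ // n ≤ n₃},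
            (2 : ℝ) ^ (-2 * n.1) *
              min ((2 : ℝ) ^ n.1) ((2 : ℝ) ^ n₁) *
              min ((2 : ℝ) ^ n.1) ((2 : ℝ) ^ n₂) *
              min ((2 : ℝ) ^ n.1) ((2 : ℝ) ^ n₃))
          ≤ C * a₁ ^ (-(1 : ℝ) / 2) * (2 + Real.log (a₁ / a₂)) := by
  refine ⟨5, by norm_num, ?_⟩
  intro a₁ a₂ a₃ n₁ n₂ n₃ ha3 h32 h21 h1l h1r h2l h2r h3l h3r
  have ha2 : 0 < a₂ := lt_of_lt_of_le ha3 h32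
  have ha1 : 0 < a₁ := lt_of_lt_of_le ha2 h21
  have hexp : (-(1:ℝ)/2) ≤ 0 := by norm_num
  -- monotone indices
  have hmono12 : a₁ ^ (-(1:ℝ)/2) ≤ a₂ ^ (-(1:ℝ)/2) :=
    Real.rpow_le_rpow_of_nonpos ha2 h21 hexp
  have hmono23 : a₂ ^ (-(1:ℝ)/2) ≤ a₃ ^ (-(1:ℝ)/2) :=
    Real.rpow_le_rpow_of_nonpos ha3 h32 hexp
  have h12 : n₁ ≤ n₂ := by
    have : (2:ℝ) ^ (n₁ - 1) < (2:ℝ) ^ n₂ := lt_of_lt_of_le (h1l.trans_le hmono12) h2r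
    have := (zpow_lt_zpow_iff_right₀ (by norm_num : (1:ℝ) < 2)).mp this
    omega
  have h23 : n₂ ≤ n₃ := by
    have : (2:ℝ) ^ (n₂ - 1) < (2:ℝ) ^ n₃ := lt_of_lt_of_le (h2l.trans_le hmono23) h3r
    have := (zpow_lt_zpow_iff_right₀ (by norm_num : (1:ℝ) < 2)).mp this
    omega
  set L := Real.log (a₁ / a₂) with hLdef
  have hL : 0 ≤ L := Real.log_nonneg ((one_le_div ha2).mpr h21)
  have hA1pos : (0:ℝ) < a₁ ^ (-(1:ℝ)/2) := Real.rpow_pos_of_pos ha1 _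
  -- 2^{n₁} ≤ 2 a₁^{-1/2}
  have hA : (2:ℝ) ^ n₁ ≤ 2 * a₁ ^ (-(1:ℝ)/2) := by
    have : (2:ℝ) ^ n₁ = 2 * (2:ℝ) ^ (n₁ - 1) := by
      rw [zpow_sub₀ (by norm_num : (2:ℝ) ≠ 0)]; ring
    rw [this]; nlinarith
  -- n₂ - n₁ ≤ 1 + L
  have hN : ((n₂ - n₁ : ℤ) : ℝ) ≤ 1 + L := by
    by_cases hcase : n₂ - n₁ ≤ 1
    · have : ((n₂ - n₁ : ℤ) : ℝ) ≤ 1 := by exact_mod_cast hcase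
      linarith
    · push_neg at hcase
      have hk : (1:ℤ) ≤ n₂ - 1 - n₁ := by omega
      have hstep : (2:ℝ) ^ (n₂ - 1 - n₁) < a₂ ^ (-(1:ℝ)/2) / a₁ ^ (-(1:ℝ)/2) := by
        rw [zpow_sub₀ (by norm_num : (2:ℝ) ≠ 0),
          div_lt_div_iff₀ (zpow_pos (by norm_num) _) hA1pos]
        have hp1 : (0:ℝ) < (2:ℝ) ^ (n₂ - 1) := zpow_pos (by norm_num) _
        have hp2 : (0:ℝ) < a₂ ^ (-(1:ℝ)/2) := Real.rpow_pos_of_pos ha2 _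
        nlinarith
      -- take logs
      have hlog : ((n₂ - 1 - n₁ : ℤ) : ℝ) * Real.log 2 < (1/2) * L := by
        have hpos : (0:ℝ) < (2:ℝ) ^ (n₂ - 1 - n₁) := zpow_pos (by norm_num) _
        have := Real.log_lt_log hpos hstep
        rw [Real.log_zpow] at this
        have hdiv : Real.log (a₂ ^ (-(1:ℝ)/2) / a₁ ^ (-(1:ℝ)/2)) = (1/2) * L := by
          rw [Real.log_div (ne_of_gt (Real.rpow_pos_of_pos ha2 _)) (ne_of_gt hA1pos),
            Real.log_rpow ha2, Real.log_rpow ha1, hLdef,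
            Real.log_div (ne_of_gt ha1) (ne_of_gt ha2)]
          ring
        rw [hdiv] at this
        exact this
      have hlog2 : (1:ℝ)/2 ≤ Real.log 2 := by
        have := Real.log_two_gt_d9; linarith
      have hk' : (1:ℝ) ≤ ((n₂ - 1 - n₁ : ℤ) : ℝ) := by exact_mod_cast hk
      have : ((n₂ - 1 - n₁ : ℤ) : ℝ) ≤ L := by nlinarith
      push_cast at this ⊢
      linarith
  -- apply the finset bound
  apply tsum_le_of_sum_le'
  · positivity
  · intro s
    classical
    have himg : ∑ x ∈ s, ((2:ℝ) ^ (-2 * x.1) * min ((2:ℝ) ^ x.1) ((2:ℝ) ^ n₁) *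
          min ((2:ℝ) ^ x.1) ((2:ℝ) ^ n₂) * min ((2:ℝ) ^ x.1) ((2:ℝ) ^ n₃))
        = ∑ n ∈ s.image Subtype.val, ((2:ℝ) ^ (-2 * n) * min ((2:ℝ) ^ n) ((2:ℝ) ^ n₁) *
          min ((2:ℝ) ^ n) ((2:ℝ) ^ n₂) * min ((2:ℝ) ^ n) ((2:ℝ) ^ n₃)) := by
      rw [Finset.sum_image (fun a _ b _ h => Subtype.ext h)]
    rw [himg]
    have hkey := aux_key n₁ n₂ n₃ h12 h23 (s.image Subtype.val) (by
      intro n hn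
      obtain ⟨x, _, rfl⟩ := Finset.mem_image.mp hn
      exact x.2)
    refine hkey.trans ?_
    have h5 : (2:ℝ) ^ n₁ * (4 + ((n₂ - n₁ : ℤ) : ℝ)) ≤ (2 * a₁ ^ (-(1:ℝ)/2)) * (5 + L) := by
      apply mul_le_mul hA ?_ ?_ (by positivity)
      · linarith
      · have : (0:ℝ) ≤ ((n₂ - n₁ : ℤ) : ℝ) := by exact_mod_cast (by omega : (0:ℤ) ≤ n₂ - n₁)
        linarith
    refine h5.trans ?_
    nlinarith
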